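/- Let X be a Banach space, let T = {T(t,s) : t, s > a₀} be an invertible evolution family on X, let h : (a₀,∞) → (0,∞) be a growth rate, and let a₀* > a₀. If T admits an h-dichotomy on [a₀*,∞), then T is h-expansive on [a₀*,∞); in fact, if P(t), D, λ are the projections and constants of the h-dichotomy, then ‖v‖ ≤ D( (h(t)/h(a))^{−λ} ‖T(a,t)v‖ + (h(b)/h(t))^{−λ} ‖T(b,t)v‖ ) for every v ∈ X and all a ≤ t ≤ b with [a,b] ⊂ [a₀*,∞). -/

import Mathlib

open Set Real

noncomputable section

variable {X : Type*} [NormedAddCommGroup X] [NormedSpace ℝ X] [CompleteSpace X]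

/-- An invertible evolution family on `X` with parameter `a₀ ∈ ℝ ∪ {-∞}` (modelled as
`EReal`), viewed as a two-parameter family `T t s` for all `t, s > a₀` (for `t < s`,
`T t s` is the inverse of `T s t`): `T t t = Id` for `t > a₀`; the two-sided cocycle
identity `T t s ∘ T s r = T t r` holds for all `t, s, r > a₀`; and for every `s > a₀`
and `v ∈ X`, the map `t ↦ T t s v` is continuous on `[s, ∞)`. -/
def IsInvertibleEvolutionFamily (a₀ : EReal) (T : ℝ → ℝ → X →L[ℝ] X) : Prop :=
  (∀ t : ℝ, a₀ < (t : EReal) → T t t = ContinuousLinearMap.id ℝ X) ∧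
  (∀ t s r : ℝ, a₀ < (t : EReal) → a₀ < (s : EReal) → a₀ < (r : EReal) →
    (T t s).comp (T s r) = T t r) ∧
  (∀ s : ℝ, a₀ < (s : EReal) → ∀ v : X, ContinuousOn (fun t => T t s v) (Set.Ici s))

/-- A growth rate: a bijective increasing map from `(a₀, ∞)` onto `(0, ∞)`. -/
def IsGrowthRate (a₀ : EReal) (h : ℝ → ℝ) : Prop :=
  StrictMonoOn h {t : ℝ | a₀ < (t : EReal)} ∧
  Set.BijOn h {t : ℝ | a₀ < (t : EReal)} (Set.Ioi (0 : ℝ))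

/-- The family of projections `P` with constants `D, lam` witnesses an `h`-dichotomy of
the invertible evolution family `T` on `J`: the `P t` are projections commuting with the
evolution family, `T t s` restricted to `Ker P s` is a bijection onto `Ker P t` for
`t ≥ s` in `J`, `‖T t s ∘ P s‖ ≤ D (h t / h s)^(-lam)` for `t ≥ s` in `J`, and
`‖T t s ∘ (Id - P s)‖ ≤ D (h s / h t)^(-lam)` for `t ≤ s` in `J` (for `t ≤ s`, `T t s`
is the inverse of `T s t`, which on `Ker P s` agrees with the inverse of
`T s t |_{Ker P t}`). -/
def HDichotomyProjWith (h : ℝ → ℝ) (T : ℝ → ℝ → X →L[ℝ] X) (J : Set ℝ)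
    (P : ℝ → X →L[ℝ] X) (D lam : ℝ) : Prop :=
  (∀ t ∈ J, (P t).comp (P t) = P t) ∧
  (∀ t ∈ J, ∀ s ∈ J, s ≤ t → (P t).comp (T t s) = (T t s).comp (P s)) ∧
  (∀ t ∈ J, ∀ s ∈ J, s ≤ t →
    Set.BijOn (T t s) (LinearMap.ker (P s : X →ₗ[ℝ] X) : Set X)
      (LinearMap.ker (P t : X →ₗ[ℝ] X) : Set X)) ∧
  (∀ t ∈ J, ∀ s ∈ J, s ≤ t → ‖(T t s).comp (P s)‖ ≤ D * (h t / h s) ^ (-lam)) ∧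
  (∀ t ∈ J, ∀ s ∈ J, t ≤ s →
    ‖(T t s).comp (ContinuousLinearMap.id ℝ X - P s)‖ ≤ D * (h s / h t) ^ (-lam))

/-- `T` admits an `h`-dichotomy on `J`. -/
def HDichotomyOn (h : ℝ → ℝ) (T : ℝ → ℝ → X →L[ℝ] X) (J : Set ℝ) : Prop :=
  ∃ (P : ℝ → X →L[ℝ] X) (D lam : ℝ), 0 < D ∧ 0 < lam ∧ HDichotomyProjWith h T J P D lam

/-- An invertible evolution family `T` is `h`-expansive on `J`: there are `L, β > 0` with
`‖v‖ ≤ L ((h t / h a)^(-β) ‖T a t v‖ + (h b / h t)^(-β) ‖T b t v‖)` for every `v ∈ X`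
and all `a ≤ t ≤ b` with `[a, b] ⊆ J`. -/
def HExpansiveOn (h : ℝ → ℝ) (T : ℝ → ℝ → X →L[ℝ] X) (J : Set ℝ) : Prop :=
  ∃ L : ℝ, 0 < L ∧ ∃ β : ℝ, 0 < β ∧
    ∀ (v : X) (a t b : ℝ), a ≤ t → t ≤ b → Set.Icc a b ⊆ J →
      ‖v‖ ≤ L * ((h t / h a) ^ (-β) * ‖T a t v‖ + (h b / h t) ^ (-β) * ‖T b t v‖)

/-- If an invertible evolution family `T` admits an `h`-dichotomy on
`[a₀*, ∞)` with projections `P` and constants `D, lam > 0`, then `T` is `h`-expansive on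
`[a₀*, ∞)`; in fact
`‖v‖ ≤ D ((h t / h a)^(-lam) ‖T a t v‖ + (h b / h t)^(-lam) ‖T b t v‖)` for every
`v ∈ X` and all `a ≤ t ≤ b` with `[a, b] ⊆ [a₀*, ∞)`. -/
theorem hDichotomy_implies_hExpansive
    (a₀ : EReal) (T : ℝ → ℝ → X →L[ℝ] X) (h : ℝ → ℝ) (astar : ℝ)
    (P : ℝ → X →L[ℝ] X) (D lam : ℝ)
    (hT : IsInvertibleEvolutionFamily a₀ T)
    (hh : IsGrowthRate a₀ h)
    (hastar : a₀ < (astar : EReal))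
    (hD : 0 < D) (hlam : 0 < lam)
    (hdich : HDichotomyProjWith h T (Set.Ici astar) P D lam) :
    HExpansiveOn h T (Set.Ici astar) ∧
    ∀ (v : X) (a t b : ℝ), astar ≤ a → a ≤ t → t ≤ b →
      ‖v‖ ≤ D * ((h t / h a) ^ (-lam) * ‖T a t v‖ +
        (h b / h t) ^ (-lam) * ‖T b t v‖) := by
  obtain ⟨hid, hcoc, -⟩ := hT
  obtain ⟨-, hcomm, -, hstab, hunst⟩ := hdich
  have key : ∀ (v : X) (a t b : ℝ), astar ≤ a → a ≤ t → t ≤ b →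
      ‖v‖ ≤ D * ((h t / h a) ^ (-lam) * ‖T a t v‖ +
        (h b / h t) ^ (-lam) * ‖T b t v‖) := by
    intro v a t b haa hat htb
    have hastar_t : astar ≤ t := le_trans haa hat
    have hastar_b : astar ≤ b := le_trans hastar_t htb
    have ha₀ : ∀ s : ℝ, astar ≤ s → a₀ < (s : EReal) := fun s hs =>
      lt_of_lt_of_le hastar (by exact_mod_cast hs)
    have ha := ha₀ a haa
    have ht := ha₀ t hastar_t
    have hb := ha₀ b hastar_b
    -- T t a (T a t v) = v
    have htat : T t a ((T a t) v) = v := by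
      have := hcoc t a t ht ha ht
      have h2 : ((T t a).comp (T a t)) v = (T t t) v := by rw [this]
      simpa [hid t ht] using h2
    have htbt : T t b ((T b t) v) = v := by
      have := hcoc t b t ht hb ht
      have h2 : ((T t b).comp (T b t)) v = (T t t) v := by rw [this]
      simpa [hid t ht] using h2
    -- P t v expressed via T a t v
    have hPt : P t v = ((T t a).comp (P a)) ((T a t) v) := by
      have hc := hcomm t hastar_t a haa hat
      calc P t v = P t (T t a ((T a t) v)) := by rw [htat]
        _ = ((P t).comp (T t a)) ((T a t) v) := rfl
        _ = ((T t a).comp (P a)) ((T a t) v) := by rw [hc]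
    -- v - P t v expressed via T b t v
    have hQt : v - P t v = ((T t b).comp (ContinuousLinearMap.id ℝ X - P b)) ((T b t) v) := by
      have hc := hcomm b hastar_b t hastar_t htb
      have hPbT : P b ((T b t) v) = (T b t) (P t v) := by
        have : ((P b).comp (T b t)) v = ((T b t).comp (P t)) v := by rw [hc]
        simpa using this
      have : ((T t b).comp (ContinuousLinearMap.id ℝ X - P b)) ((T b t) v)
          = T t b ((T b t) v) - T t b (P b ((T b t) v)) := by
        simp [ContinuousLinearMap.comp_apply, ContinuousLinearMap.sub_apply, map_sub]
      rw [this, htbt, hPbT]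
      have hTtbTbtP : T t b ((T b t) (P t v)) = P t v := by
        have := hcoc t b t ht hb ht
        have h2 : ((T t b).comp (T b t)) (P t v) = (T t t) (P t v) := by rw [this]
        simpa [hid t ht] using h2
      rw [hTtbTbtP]
    have hbound1 : ‖P t v‖ ≤ D * (h t / h a) ^ (-lam) * ‖(T a t) v‖ := by
      rw [hPt]
      exact ContinuousLinearMap.le_of_opNorm_le _
        (hstab t hastar_t a haa hat) _
    have hbound2 : ‖v - P t v‖ ≤ D * (h b / h t) ^ (-lam) * ‖(T b t) v‖ := by
      rw [hQt]
      exact ContinuousLinearMap.le_of_opNorm_le _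
        (hunst t hastar_t b hastar_b htb) _
    have htriangle : ‖v‖ ≤ ‖P t v‖ + ‖v - P t v‖ := by
      have : v = P t v + (v - P t v) := by abel
      calc ‖v‖ = ‖P t v + (v - P t v)‖ := by rw [← this]
        _ ≤ ‖P t v‖ + ‖v - P t v‖ := norm_add_le _ _
    calc ‖v‖ ≤ ‖P t v‖ + ‖v - P t v‖ := htriangle
      _ ≤ D * (h t / h a) ^ (-lam) * ‖(T a t) v‖ +
          D * (h b / h t) ^ (-lam) * ‖(T b t) v‖ := add_le_add hbound1 hbound2
      _ = D * ((h t / h a) ^ (-lam) * ‖T a t v‖ +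
          (h b / h t) ^ (-lam) * ‖T b t v‖) := by ring
  refine ⟨⟨D, hD, lam, hlam, fun v a t b hat htb hsub => ?_⟩, key⟩
  exact key v a t b (hsub ⟨le_refl a, le_trans hat htb⟩) hat htb
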